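/- Every term τ of type cyl_n over m variables is equivalent, in all Boolean algebras with operators of type cyl_n, to a finite sum of normal forms of a single degree q; moreover q and the set S_τ ⊆ F^{n,m}_q with τ = Σ S_τ can be computed effectively from τ. -/

import Mathlib

/-- The set of atomic generators: diagonals `d i j` and the `m` free variables. -/
abbrev DAtom (n m : ℕ) : Type := Fin n × Fin n ⊕ Fin m

/-- The type of normal forms of degree `k` (for type `cyl_n` over `m` variables).
A normal form of degree `0` is a complete conjunction over `D = {d_ij} ∪ {x_0,…,x_{m-1}}`,
i.e. it is coded by a sign function `β : D → Bool`.  A normal form of degree `k+1` is a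
complete conjunction over `D` together with the cylindrifications `c i σ` of all normal
forms `σ` of degree `k`, coded by a pair of sign functions. -/
def NF (n m : ℕ) : ℕ → Type
  | 0 => DAtom n m → Bool
  | k + 1 => (DAtom n m → Bool) × (Fin n × NF n m k → Bool)

/-- Normal forms of each degree form a finite type with decidable equality. -/
def NF.inst (n m : ℕ) : ∀ k, Fintype (NF n m k) × DecidableEq (NF n m k)
  | 0 =>
    (inferInstanceAs (Fintype (DAtom n m → Bool)),
     inferInstanceAs (DecidableEq (DAtom n m → Bool)))
  | k + 1 =>
    letI := (NF.inst n m k).1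
    letI := (NF.inst n m k).2
    (inferInstanceAs (Fintype ((DAtom n m → Bool) × (Fin n × NF n m k → Bool))),
     inferInstanceAs (DecidableEq ((DAtom n m → Bool) × (Fin n × NF n m k → Bool))))

instance (n m k : ℕ) : Fintype (NF n m k) := (NF.inst n m k).1
instance (n m k : ℕ) : DecidableEq (NF n m k) := (NF.inst n m k).2

/-- Evaluation of an atomic generator in an algebra of type `cyl_n`. -/
def dEval {n m : ℕ} {B : Type*} (d : Fin n → Fin n → B) (v : Fin m → B) :
    DAtom n m → B
  | .inl (i, j) => d i j
  | .inr i => v i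

/-- Evaluation of a normal form of degree `k` in a Boolean algebra with operators
`c i` and constants `d i j`, under the evaluation `v` of the variables. -/
def nfEval {n m : ℕ} {B : Type*} [BooleanAlgebra B] (c : Fin n → B → B)
    (d : Fin n → Fin n → B) (v : Fin m → B) : ∀ k, NF n m k → B
  | 0, β =>
      Finset.univ.inf fun a : DAtom n m =>
        if β a then dEval d v a else (dEval d v a)ᶜ
  | k + 1, σ =>
      let σ' : (DAtom n m → Bool) × (Fin n × NF n m k → Bool) := σ
      (Finset.univ.inf fun a : DAtom n m =>
        if σ'.1 a then dEval d v a else (dEval d v a)ᶜ) ⊓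
      Finset.univ.inf fun p : Fin n × NF n m k =>
        if σ'.2 p then c p.1 (nfEval c d v k p.2)
        else (c p.1 (nfEval c d v k p.2))ᶜ

/-- Terms of type `cyl_n` over `m` variables. -/
inductive Term (n m : ℕ) : Type
  | var : Fin m → Term n m
  | bot : Term n m
  | top : Term n m
  | dg : Fin n → Fin n → Term n m
  | compl : Term n m → Term n m
  | inf : Term n m → Term n m → Term n m
  | sup : Term n m → Term n m → Term n m
  | cyl : Fin n → Term n m → Term n m

/-- Evaluation of a term of type `cyl_n` in a Boolean algebra with operators. -/
def Term.eval {n m : ℕ} {B : Type*} [BooleanAlgebra B] (c : Fin n → B → B)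
    (d : Fin n → Fin n → B) (v : Fin m → B) : Term n m → B
  | .var i => v i
  | .bot => ⊥
  | .top => ⊤
  | .dg i j => d i j
  | .compl t => (t.eval c d v)ᶜ
  | .inf t s => t.eval c d v ⊓ s.eval c d v
  | .sup t s => t.eval c d v ⊔ s.eval c d v
  | .cyl i t => c i (t.eval c d v)



section BConj
variable {B : Type*} [BooleanAlgebra B] {I : Type*} [Fintype I]

/-- complete conjunction with sign function `β` over the family `x`. -/
def bconj (x : I → B) (β : I → Bool) : B :=
  Finset.univ.inf fun a => if β a then x a else (x a)ᶜ

lemma bconj_le (x : I → B) (β : I → Bool) (a : I) :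
    bconj x β ≤ if β a then x a else (x a)ᶜ :=
  Finset.inf_le (Finset.mem_univ a)

lemma bconj_le_of_true {x : I → B} {β : I → Bool} {a : I} (h : β a = true) :
    bconj x β ≤ x a := by simpa [h] using bconj_le x β a

lemma bconj_le_of_false {x : I → B} {β : I → Bool} {a : I} (h : β a = false) :
    bconj x β ≤ (x a)ᶜ := by simpa [h] using bconj_le x β a

lemma sup_inf_lit_top [DecidableEq I] (x : I → B) (s : Finset I) :
    (Finset.univ : Finset (I → Bool)).sup
      (fun β => s.inf fun a => if β a then x a else (x a)ᶜ) = ⊤ := by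
  induction s using Finset.induction_on with
  | empty =>
      simp only [Finset.inf_empty]
      exact Finset.sup_const Finset.univ_nonempty _
  | @insert a s ha ih =>
      apply le_antisymm le_top
      have key : ∀ b : Bool,
          (if b then x a else (x a)ᶜ) ⊓
            ((Finset.univ : Finset (I → Bool)).sup
              fun β => s.inf fun i => if β i then x i else (x i)ᶜ) ≤
          (Finset.univ : Finset (I → Bool)).sup
            (fun β => (insert a s).inf fun i => if β i then x i else (x i)ᶜ) := by
        intro b
        rw [Finset.sup_inf_distrib_left]
        apply Finset.sup_le
        intro β _
        have h1 : (if b then x a else (x a)ᶜ) ⊓ (s.inf fun i => if β i then x i else (x i)ᶜ)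
            = (insert a s).inf fun i =>
                if (Function.update β a b) i then x i else (x i)ᶜ := by
          rw [Finset.inf_insert, Function.update_self]
          congr 1
          refine Finset.inf_congr rfl fun i hi => ?_
          rw [Function.update_of_ne (by rintro rfl; exact ha hi)]
        rw [h1]
        exact Finset.le_sup (f := fun β : I → Bool => (insert a s).inf fun i => if β i then x i else (x i)ᶜ) (Finset.mem_univ (Function.update β a b))
      calc (⊤ : B) = (x a ⊔ (x a)ᶜ) ⊓
            ((Finset.univ : Finset (I → Bool)).sup
              fun β => s.inf fun i => if β i then x i else (x i)ᶜ) := by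
              rw [sup_compl_eq_top, ih, top_inf_eq]
        _ = (x a ⊓ ((Finset.univ : Finset (I → Bool)).sup
              fun β => s.inf fun i => if β i then x i else (x i)ᶜ)) ⊔
            ((x a)ᶜ ⊓ ((Finset.univ : Finset (I → Bool)).sup
              fun β => s.inf fun i => if β i then x i else (x i)ᶜ)) := inf_sup_right _ _ _
        _ ≤ ((Finset.univ : Finset (I → Bool)).sup
              (fun β => (insert a s).inf fun i => if β i then x i else (x i)ᶜ)) ⊔
            ((Finset.univ : Finset (I → Bool)).sup
              (fun β => (insert a s).inf fun i => if β i then x i else (x i)ᶜ)) :=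
            sup_le_sup (by simpa using key true) (by simpa using key false)
        _ = _ := sup_idem _

lemma sup_bconj [DecidableEq I] (x : I → B) :
    (Finset.univ : Finset (I → Bool)).sup (bconj x) = ⊤ :=
  sup_inf_lit_top x Finset.univ

lemma bconj_disjoint (x : I → B) {β β' : I → Bool} (h : β ≠ β') :
    Disjoint (bconj x β) (bconj x β') := by
  obtain ⟨a, ha⟩ : ∃ a, β a ≠ β' a := by
    by_contra h'; push_neg at h'; exact h (funext h')
  cases hb : β a <;> cases hb' : β' a
  · exact absurd (hb.trans hb'.symm) ha
  · exact disjoint_compl_left.mono (bconj_le_of_false hb) (bconj_le_of_true hb')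
  · exact disjoint_compl_right.mono (bconj_le_of_true hb) (bconj_le_of_false hb')
  · exact absurd (hb.trans hb'.symm) ha

end BConj
section NFLemmas
variable {n m : ℕ} {B : Type*} [BooleanAlgebra B]
  (c : Fin n → B → B) (d : Fin n → Fin n → B) (v : Fin m → B)

lemma nfEval_zero (β : NF n m 0) :
    nfEval c d v 0 β = bconj (dEval d v) β := rfl

lemma nfEval_succ (k : ℕ) (σ : NF n m (k + 1)) :
    nfEval c d v (k + 1) σ =
      bconj (dEval d v) σ.1 ⊓
      bconj (fun p : Fin n × NF n m k => c p.1 (nfEval c d v k p.2)) σ.2 := rfl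

lemma sup_nfEval_top : ∀ k, (Finset.univ : Finset (NF n m k)).sup (nfEval c d v k) = ⊤
  | 0 => sup_bconj (dEval d v)
  | k + 1 => by
      apply le_antisymm le_top
      calc (⊤ : B) = ((Finset.univ : Finset (DAtom n m → Bool)).sup (bconj (dEval d v))) ⊓
            ((Finset.univ : Finset (Fin n × NF n m k → Bool)).sup
              (bconj fun p : Fin n × NF n m k => c p.1 (nfEval c d v k p.2))) := by
            rw [sup_bconj, sup_bconj, top_inf_eq]
        _ = ((Finset.univ : Finset (DAtom n m → Bool)) ×ˢ
              (Finset.univ : Finset (Fin n × NF n m k → Bool))).sup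
              (fun σ => bconj (dEval d v) σ.1 ⊓
                bconj (fun p : Fin n × NF n m k => c p.1 (nfEval c d v k p.2)) σ.2) :=
            Finset.sup_inf_sup _ _ _ _
        _ ≤ (Finset.univ : Finset (NF n m (k+1))).sup (nfEval c d v (k+1)) := by
            apply Finset.sup_le
            intro σ _
            exact le_of_eq (nfEval_succ c d v k σ).symm |>.trans
              (Finset.le_sup (Finset.mem_univ (σ : NF n m (k+1))))

lemma dec_sup (k : ℕ) (y : B) (S : Finset (NF n m k))
    (h1 : ∀ σ ∈ S, nfEval c d v k σ ≤ y)
    (h2 : ∀ σ ∉ S, nfEval c d v k σ ≤ yᶜ) :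
    S.sup (nfEval c d v k) = y := by
  apply le_antisymm (Finset.sup_le h1)
  calc y = y ⊓ Finset.univ.sup (nfEval c d v k) := by rw [sup_nfEval_top, inf_top_eq]
    _ = Finset.univ.sup (fun σ => y ⊓ nfEval c d v k σ) := Finset.sup_inf_distrib_left _ _ _
    _ ≤ S.sup (nfEval c d v k) := by
        apply Finset.sup_le
        intro σ _
        by_cases hσ : σ ∈ S
        · exact inf_le_right.trans (Finset.le_sup hσ)
        · have h := inf_le_inf_left y (h2 σ hσ)
          exact (h.trans (le_of_eq inf_compl_eq_bot)).trans bot_le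

lemma nfEval_disjoint (k : ℕ) {σ τ : NF n m k} (h : σ ≠ τ) :
    Disjoint (nfEval c d v k σ) (nfEval c d v k τ) := by
  match k, σ, τ with
  | 0, σ, τ => exact bconj_disjoint (dEval d v) h
  | k + 1, σ, τ =>
    rw [nfEval_succ, nfEval_succ]
    have hd : σ.1 ≠ τ.1 ∨ σ.2 ≠ τ.2 := by
      by_contra hc; push_neg at hc
      exact h (Prod.ext hc.1 hc.2)
    rcases hd with h' | h'
    · exact (bconj_disjoint (dEval d v) h').mono inf_le_left inf_le_left
    · exact (bconj_disjoint _ h').mono inf_le_right inf_le_right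

lemma nfEval_disjoint_sup (k : ℕ) {σ : NF n m k} {S : Finset (NF n m k)} (h : σ ∉ S) :
    Disjoint (nfEval c d v k σ) (S.sup (nfEval c d v k)) :=
  Finset.disjoint_sup_right.mpr fun τ hτ =>
    nfEval_disjoint c d v k (fun e => h (e ▸ hτ))

lemma sup_sdiff_eq_compl (k : ℕ) (S : Finset (NF n m k)) :
    (Finset.univ \ S).sup (nfEval c d v k) = (S.sup (nfEval c d v k))ᶜ := by
  apply dec_sup
  · intro σ hσ
    rw [le_compl_iff_disjoint_right]
    exact nfEval_disjoint_sup c d v k (Finset.mem_sdiff.mp hσ).2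
  · intro σ hσ
    rw [compl_compl]
    have : σ ∈ S := by
      by_contra hs
      exact hσ (Finset.mem_sdiff.mpr ⟨Finset.mem_univ _, hs⟩)
    exact Finset.le_sup this

lemma sup_inter_eq_inf (k : ℕ) (S T : Finset (NF n m k)) :
    (S ∩ T).sup (nfEval c d v k) = S.sup (nfEval c d v k) ⊓ T.sup (nfEval c d v k) := by
  apply dec_sup
  · intro σ hσ
    rcases Finset.mem_inter.mp hσ with ⟨h1, h2⟩
    exact le_inf (Finset.le_sup h1) (Finset.le_sup h2)
  · intro σ hσ
    rw [compl_inf]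
    rcases (by simpa [Finset.mem_inter, -not_and, not_and_or] using hσ :
        σ ∉ S ∨ σ ∉ T) with h | h
    · exact le_sup_of_le_left
        (le_compl_iff_disjoint_right.mpr (nfEval_disjoint_sup c d v k h))
    · exact le_sup_of_le_right
        (le_compl_iff_disjoint_right.mpr (nfEval_disjoint_sup c d v k h))

lemma c_mono (hca : ∀ (i : Fin n) (x y : B), c i (x ⊔ y) = c i x ⊔ c i y)
    (i : Fin n) {x y : B} (h : x ≤ y) : c i x ≤ c i y := by
  calc c i x ≤ c i x ⊔ c i y := le_sup_left
    _ = c i (x ⊔ y) := (hca i x y).symm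
    _ = c i y := by rw [sup_eq_right.mpr h]

lemma c_finset_sup (hc0 : ∀ i : Fin n, c i ⊥ = ⊥)
    (hca : ∀ (i : Fin n) (x y : B), c i (x ⊔ y) = c i x ⊔ c i y)
    (i : Fin n) {α : Type*} [DecidableEq α] (S : Finset α) (f : α → B) :
    c i (S.sup f) = S.sup (fun σ => c i (f σ)) := by
  induction S using Finset.induction_on with
  | empty => simpa using hc0 i
  | @insert a S ha ih => rw [Finset.sup_insert, hca, ih, Finset.sup_insert]

lemma cyl_nf_sup (k : ℕ) (i : Fin n) (σ : NF n m k) (T : Finset (NF n m (k + 1)))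
    (hT : ∀ τ : NF n m (k + 1), τ ∈ T ↔ τ.2 (i, σ) = true) :
    T.sup (nfEval c d v (k + 1)) = c i (nfEval c d v k σ) := by
  apply dec_sup
  · intro τ hτ
    rw [nfEval_succ]
    exact inf_le_right.trans (bconj_le_of_true ((hT τ).mp hτ))
  · intro τ hτ
    have hf : τ.2 (i, σ) = false := by
      cases hb : τ.2 (i, σ)
      · rfl
      · exact absurd ((hT τ).mpr hb) hτ
    rw [nfEval_succ]
    exact inf_le_right.trans (bconj_le_of_false hf)

lemma le_bconj {I : Type*} [Fintype I] {x : I → B} {β : I → Bool} {y : B}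
    (h : ∀ a, y ≤ if β a then x a else (x a)ᶜ) : y ≤ bconj x β :=
  Finset.le_inf fun a _ => h a

end NFLemmas

/-- Lift a normal form of degree `k` to a set of normal forms of degree `k+1`
representing the same element. -/
def lift1 {n m : ℕ} : ∀ k, NF n m k → Finset (NF n m (k + 1))
  | 0, σ => @Finset.filter _ (fun τ : NF n m 1 => τ.1 = σ) (fun τ => (inferInstance : DecidableEq (NF n m 0)) τ.1 σ) Finset.univ
  | k + 1, σ => Finset.univ.filter fun τ : NF n m (k + 2) =>
      τ.1 = σ.1 ∧ ∀ p : Fin n × NF n m k,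
        σ.2 p = decide (∃ ρ ∈ lift1 k p.2, τ.2 (p.1, ρ) = true)

section LiftLemmas
variable {n m : ℕ} {B : Type*} [BooleanAlgebra B]
  (c : Fin n → B → B) (d : Fin n → Fin n → B) (v : Fin m → B)

lemma lift1_sup (hc0 : ∀ i : Fin n, c i ⊥ = ⊥)
    (hca : ∀ (i : Fin n) (x y : B), c i (x ⊔ y) = c i x ⊔ c i y) :
    ∀ (k : ℕ) (σ : NF n m k),
    (lift1 k σ).sup (nfEval c d v (k + 1)) = nfEval c d v k σ
  | 0, σ => by
    apply dec_sup
    · intro τ hτ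
      simp only [lift1] at hτ
      have h1 : τ.1 = σ := (@Finset.mem_filter _ (fun τ : NF n m 1 => τ.1 = σ) (fun τ => (inferInstance : DecidableEq (NF n m 0)) τ.1 σ) _ _).mp hτ |>.2
      rw [nfEval_succ, nfEval_zero, h1]
      exact inf_le_left
    · intro τ hτ
      simp only [lift1] at hτ
      have h1 : τ.1 ≠ σ := fun h =>
        hτ ((@Finset.mem_filter _ (fun τ : NF n m 1 => τ.1 = σ) (fun τ => (inferInstance : DecidableEq (NF n m 0)) τ.1 σ) _ _).mpr ⟨Finset.mem_univ _, h⟩)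
      rw [nfEval_succ, nfEval_zero]
      refine inf_le_left.trans (le_compl_iff_disjoint_right.mpr ?_)
      exact bconj_disjoint (dEval d v) h1
  | k + 1, σ => by
    have IH := lift1_sup hc0 hca k
    -- the cylindric part of a degree-(k+2) form is below `(c p.1 (nfEval _ _ _ k p.2))ᶜ`
    -- whenever the form negates all lifted copies
    have key : ∀ (τ2 : Fin n × NF n m (k + 1) → Bool) (p : Fin n × NF n m k),
        (∀ ρ ∈ lift1 k p.2, τ2 (p.1, ρ) = false) →
        bconj (fun q : Fin n × NF n m (k + 1) => c q.1 (nfEval c d v (k + 1) q.2)) τ2 ≤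
          (c p.1 (nfEval c d v k p.2))ᶜ := by
      intro τ2 p h
      rw [le_compl_iff_disjoint_right, ← IH p.2, c_finset_sup c hc0 hca]
      exact Finset.disjoint_sup_right.mpr fun ρ hρ =>
        le_compl_iff_disjoint_right.mp (bconj_le_of_false (h ρ hρ))
    have key2 : ∀ (τ2 : Fin n × NF n m (k + 1) → Bool) (p : Fin n × NF n m k)
        (ρ : NF n m (k + 1)), ρ ∈ lift1 k p.2 → τ2 (p.1, ρ) = true →
        bconj (fun q : Fin n × NF n m (k + 1) => c q.1 (nfEval c d v (k + 1) q.2)) τ2 ≤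
          c p.1 (nfEval c d v k p.2) := by
      intro τ2 p ρ hρmem hρ
      refine (bconj_le_of_true hρ).trans (c_mono c hca p.1 ?_)
      rw [← IH p.2]
      exact Finset.le_sup hρmem
    apply dec_sup
    · intro τ hτ
      simp only [lift1] at hτ
      have hmem := (Finset.mem_filter.mp hτ).2
      rw [nfEval_succ, nfEval_succ, hmem.1]
      refine inf_le_inf_left _ (le_bconj fun p => ?_)
      have hp := hmem.2 p
      cases hσp : σ.2 p with
      | true =>
        rw [hσp] at hp
        obtain ⟨ρ, hρmem, hρ⟩ := of_decide_eq_true hp.symm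
        rw [if_pos rfl]
        exact key2 τ.2 p ρ hρmem hρ
      | false =>
        rw [hσp] at hp
        have hall : ∀ ρ ∈ lift1 k p.2, τ.2 (p.1, ρ) = false := by
          have h' := of_decide_eq_false hp.symm
          push_neg at h'
          intro ρ hρ
          simpa using h' ρ hρ
        rw [if_neg (by simp)]
        exact key τ.2 p hall
    · intro τ hτ
      simp only [lift1] at hτ
      have hP : ¬(τ.1 = σ.1 ∧ ∀ p : Fin n × NF n m k,
          σ.2 p = decide (∃ ρ ∈ lift1 k p.2, τ.2 (p.1, ρ) = true)) := fun h =>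
        hτ (Finset.mem_filter.mpr ⟨Finset.mem_univ _, h⟩)
      by_cases ha : τ.1 = σ.1
      · have hB : ∃ p : Fin n × NF n m k,
            σ.2 p ≠ decide (∃ ρ ∈ lift1 k p.2, τ.2 (p.1, ρ) = true) := by
          by_contra h'
          push_neg at h'
          exact hP ⟨ha, h'⟩
        obtain ⟨p, hp⟩ := hB
        rw [nfEval_succ, nfEval_succ]
        cases hσp : σ.2 p with
        | true =>
          rw [hσp] at hp
          have hdec : decide (∃ ρ ∈ lift1 k p.2, τ.2 (p.1, ρ) = true) = false := by
            cases h' : decide (∃ ρ ∈ lift1 k p.2, τ.2 (p.1, ρ) = true)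
            · rfl
            · exact absurd h'.symm hp
          have hall : ∀ ρ ∈ lift1 k p.2, τ.2 (p.1, ρ) = false := by
            have h' := of_decide_eq_false hdec
            push_neg at h'
            intro ρ hρ
            simpa using h' ρ hρ
          refine (inf_le_right.trans (key τ.2 p hall)).trans (compl_le_compl ?_)
          exact inf_le_right.trans (bconj_le_of_true hσp)
        | false =>
          rw [hσp] at hp
          have hdec : decide (∃ ρ ∈ lift1 k p.2, τ.2 (p.1, ρ) = true) = true := by
            cases h' : decide (∃ ρ ∈ lift1 k p.2, τ.2 (p.1, ρ) = true)
            · exact absurd h'.symm hp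
            · rfl
          obtain ⟨ρ, hρmem, hρ⟩ := of_decide_eq_true hdec
          have h1 : nfEval c d v (k + 1) σ ≤ (c p.1 (nfEval c d v k p.2))ᶜ :=
            inf_le_right.trans (bconj_le_of_false hσp)
          calc bconj (dEval d v) τ.1 ⊓ _ ≤ c p.1 (nfEval c d v k p.2) :=
                inf_le_right.trans (key2 τ.2 p ρ hρmem hρ)
            _ = ((c p.1 (nfEval c d v k p.2))ᶜ)ᶜ := (compl_compl _).symm
            _ ≤ (nfEval c d v (k + 1) σ)ᶜ := compl_le_compl h1
      · rw [nfEval_succ]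
        refine inf_le_left.trans ?_
        have : bconj (dEval d v) τ.1 ≤ (bconj (dEval d v) σ.1)ᶜ :=
          le_compl_iff_disjoint_right.mpr (bconj_disjoint (dEval d v) ha)
        refine this.trans (compl_le_compl ?_)
        rw [nfEval_succ]
        exact inf_le_left

end LiftLemmas

/-- Lift a set of normal forms of degree `k` to degree `k + j`. -/
def liftN {n m : ℕ} : ∀ (j k : ℕ), Finset (NF n m k) → Finset (NF n m (k + j))
  | 0, _, S => S
  | j + 1, k, S => (liftN j k S).biUnion (lift1 (k + j))

/-- Transport a set of normal forms along an equality of degrees. -/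
def castNF {n m : ℕ} {k k' : ℕ} (h : k = k') (S : Finset (NF n m k)) :
    Finset (NF n m k') := h ▸ S

/-- The normal-form assignment: to each term we associate a degree and a set of
normal forms of that degree. -/
def nfOf {n m : ℕ} : Term n m → (q : ℕ) × Finset (NF n m q)
  | .var i => ⟨0, Finset.univ.filter fun β : NF n m 0 => β (.inr i) = true⟩
  | .bot => ⟨0, ∅⟩
  | .top => ⟨0, Finset.univ⟩
  | .dg i j => ⟨0, Finset.univ.filter fun β : NF n m 0 => β (.inl (i, j)) = true⟩
  | .compl t => ⟨(nfOf t).1, Finset.univ \ (nfOf t).2⟩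
  | .inf t s => ⟨(nfOf t).1 + (nfOf s).1,
      liftN (nfOf s).1 (nfOf t).1 (nfOf t).2 ∩
        castNF (Nat.add_comm _ _) (liftN (nfOf t).1 (nfOf s).1 (nfOf s).2)⟩
  | .sup t s => ⟨(nfOf t).1 + (nfOf s).1,
      liftN (nfOf s).1 (nfOf t).1 (nfOf t).2 ∪
        castNF (Nat.add_comm _ _) (liftN (nfOf t).1 (nfOf s).1 (nfOf s).2)⟩
  | .cyl i t => ⟨(nfOf t).1 + 1,
      (nfOf t).2.biUnion fun σ =>
        Finset.univ.filter fun τ : NF n m ((nfOf t).1 + 1) => τ.2 (i, σ) = true⟩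

section Correct
variable {n m : ℕ} {B : Type*} [BooleanAlgebra B]
  (c : Fin n → B → B) (d : Fin n → Fin n → B) (v : Fin m → B)

lemma liftN_sup (hc0 : ∀ i : Fin n, c i ⊥ = ⊥)
    (hca : ∀ (i : Fin n) (x y : B), c i (x ⊔ y) = c i x ⊔ c i y) :
    ∀ (j k : ℕ) (S : Finset (NF n m k)),
      (liftN j k S).sup (nfEval c d v (k + j)) = S.sup (nfEval c d v k)
  | 0, _, _ => rfl
  | j + 1, k, S => by
    rw [liftN, Finset.sup_biUnion]
    calc (liftN j k S).sup (fun σ => (lift1 (k + j) σ).sup (nfEval c d v (k + j + 1)))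
        = (liftN j k S).sup (nfEval c d v (k + j)) :=
          Finset.sup_congr rfl fun σ _ => lift1_sup c d v hc0 hca (k + j) σ
      _ = S.sup (nfEval c d v k) := liftN_sup hc0 hca j k S

lemma castNF_sup {k k' : ℕ} (h : k = k') (S : Finset (NF n m k)) :
    (castNF h S).sup (nfEval c d v k') = S.sup (nfEval c d v k) := by
  subst h; rfl

lemma dEval_sup (a : DAtom n m) :
    (Finset.univ.filter fun β : NF n m 0 => β a = true).sup (nfEval c d v 0) =
      dEval d v a := by
  apply dec_sup
  · intro β hβ
    have h : β a = true := (Finset.mem_filter.mp hβ).2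
    rw [nfEval_zero]
    exact bconj_le_of_true h
  · intro β hβ
    have h : β a = false := by
      cases hb : β a
      · rfl
      · exact absurd (show β ∈ Finset.univ.filter (fun β : NF n m 0 => β a = true)
          from Finset.mem_filter.mpr ⟨Finset.mem_univ β, hb⟩) hβ
    rw [nfEval_zero]
    exact bconj_le_of_false h

lemma nfOf_correct (hc0 : ∀ i : Fin n, c i ⊥ = ⊥)
    (hca : ∀ (i : Fin n) (x y : B), c i (x ⊔ y) = c i x ⊔ c i y) :
    ∀ τ : Term n m, τ.eval c d v = (nfOf τ).2.sup (nfEval c d v (nfOf τ).1)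
  | .var i => (dEval_sup c d v (.inr i)).symm
  | .bot => by simp [nfOf, Term.eval]
  | .top => by
      rw [nfOf]
      exact (sup_nfEval_top c d v 0).symm
  | .dg i j => (dEval_sup c d v (.inl (i, j))).symm
  | .compl t => by
      rw [nfOf, Term.eval, nfOf_correct hc0 hca t, sup_sdiff_eq_compl]
  | .inf t s => by
      rw [nfOf, Term.eval, nfOf_correct hc0 hca t, nfOf_correct hc0 hca s,
        sup_inter_eq_inf, castNF_sup, liftN_sup c d v hc0 hca,
        liftN_sup c d v hc0 hca]
  | .sup t s => by
      rw [nfOf, Term.eval, nfOf_correct hc0 hca t, nfOf_correct hc0 hca s,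
        Finset.sup_union, castNF_sup, liftN_sup c d v hc0 hca,
        liftN_sup c d v hc0 hca]
  | .cyl i t => by
      rw [nfOf, Term.eval, nfOf_correct hc0 hca t, Finset.sup_biUnion,
        c_finset_sup c hc0 hca]
      refine Finset.sup_congr rfl fun σ _ => ?_
      exact (cyl_nf_sup c d v (nfOf t).1 i σ _ fun τ => by
        simp [Finset.mem_filter]).symm

end Correct
/-- There is an (effectively computable) assignment `f` taking each term `τ` of type
`cyl_n` over `m` variables to a degree `q` and a finite set `S_τ ⊆ F^{n,m}_q` of normal
forms of degree `q` such that `τ = Σ S_τ` is valid in every Boolean algebra with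
(normal, additive) operators of type `cyl_n`. -/
theorem stmt_11 (n m : ℕ) :
    ∃ f : Term n m → (q : ℕ) × Finset (NF n m q),
      ∀ (τ : Term n m) (B : Type*) [BooleanAlgebra B]
        (c : Fin n → B → B) (d : Fin n → Fin n → B) (v : Fin m → B),
        (∀ i : Fin n, c i ⊥ = ⊥) →
        (∀ (i : Fin n) (x y : B), c i (x ⊔ y) = c i x ⊔ c i y) →
        τ.eval c d v = (f τ).2.sup (nfEval c d v (f τ).1) := by
  refine ⟨nfOf, ?_⟩
  intro τ B _ c d v hc0 hca
  exact nfOf_correct c d v hc0 hca τ
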